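/- Let Φ be a root system with Weyl group W, and let S ⊆ Φ⁺. Then S = I(w) for some w ∈ W if and only if S is biconvex: for every rank-two subsystem Φ' ⊆ Φ with its induced positive roots ordered as a chain (η, η+γ, γ) in type A₂ or (η, η+γ, η+2γ, γ) in type B₂ (with η,γ the simple roots of Φ' and γ the shorter one), S ∩ Φ'⁺ is either an initial or a final segment of this ordering. -/

import Mathlib

/-- `S` is an initial or final segment of the chain recorded by the list `l`. -/
def IsSeg {V : Type*} (l : List V) (S : Set V) : Prop :=
  ∃ k ≤ l.length,
    S ∩ {x | x ∈ l} = {x | x ∈ l.take k} ∨ S ∩ {x | x ∈ l} = {x | x ∈ l.drop k}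

/-- A reflection in the root `α` preserving the root system `Φ`. -/
def IsRootReflection {V : Type*} [AddCommGroup V] [Module ℝ V]
    (Φ : Set V) (α : V) (g : V ≃ₗ[ℝ] V) : Prop :=
  (∃ f : V →ₗ[ℝ] ℝ, f α = 2 ∧ ∀ v, g v = v - f v • α) ∧ ∀ β ∈ Φ, g β ∈ Φ

namespace Stmt5Aux

variable {V : Type*} [AddCommGroup V] [Module ℝ V]

def Closed (Pos S : Set V) : Prop :=
  ∀ β γ : V, β ∈ Pos → γ ∈ Pos → β + γ ∈ Pos → β ∈ S → γ ∈ S → β + γ ∈ S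

def Coclosed (Pos S : Set V) : Prop :=
  ∀ β γ : V, β ∈ Pos → γ ∈ Pos → β + γ ∈ S → β ∈ S ∨ γ ∈ S

lemma memL {A B : Set V} (he : A = B) {x : V} (h : x ∈ A) : x ∈ B := he ▸ h
lemma memR {A B : Set V} (he : A = B) {x : V} (h : x ∈ B) : x ∈ A := he.symm ▸ h

lemma ne_zero_of_pos {Pos : Set V} (f : V →ₗ[ℝ] ℝ) (hf : ∀ α ∈ Pos, 0 < f α)
    {η : V} (hη : η ∈ Pos) : η ≠ 0 := by
  intro h
  have := hf η hη
  rw [h, map_zero] at this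
  exact lt_irrefl 0 this

lemma indep {Pos : Set V} (f : V →ₗ[ℝ] ℝ) (hf : ∀ α ∈ Pos, 0 < f α)
    (hred : ∀ α ∈ Pos, ∀ r : ℝ, r • α ∈ Pos → r = 1)
    {η γ : V} (hη : η ∈ Pos) (hγ : γ ∈ Pos) (hne : η ≠ γ)
    (a b : ℝ) (h : a • η + b • γ = 0) : a = 0 ∧ b = 0 := by
  by_cases hb : b = 0
  · subst hb
    refine ⟨?_, rfl⟩
    by_contra ha
    have h0 : a • η = 0 := by linear_combination (norm := module) h
    rcases smul_eq_zero.mp h0 with h1 | h1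
    · exact ha h1
    · exact ne_zero_of_pos f hf hη h1
  · exfalso
    have h2 : γ = (b⁻¹ * (-a)) • η := by
      have h3 : b • γ = (-a) • η := by linear_combination (norm := module) h
      rw [← smul_smul, ← h3, smul_smul, inv_mul_cancel₀ hb, one_smul]
    have := hred η hη _ (h2 ▸ hγ)
    rw [this, one_smul] at h2
    exact hne h2.symm

lemma three_ne_two {a b c x y : V} (h1 : a = x ∨ a = y) (h2 : b = x ∨ b = y)
    (h3 : c = x ∨ c = y) (hab : a ≠ b) (hac : a ≠ c) (hbc : b ≠ c) : False := by
  rcases h1 with rfl | rfl <;> rcases h2 with rfl | rfl <;> rcases h3 with rfl | rfl <;>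
    simp_all

lemma closure_maps {Φ : Set V} (w : V ≃ₗ[ℝ] V)
    (hw : w ∈ Subgroup.closure {g : V ≃ₗ[ℝ] V | ∃ α ∈ Φ, IsRootReflection Φ α g}) :
    ∀ β ∈ Φ, w β ∈ Φ := by
  have key : ∀ g ∈ Subgroup.closure {g : V ≃ₗ[ℝ] V | ∃ α ∈ Φ, IsRootReflection Φ α g},
      (∀ β ∈ Φ, g β ∈ Φ) ∧ (∀ β ∈ Φ, g⁻¹ β ∈ Φ) := by
    intro g hg
    induction hg using Subgroup.closure_induction with
    | mem x hx =>
      obtain ⟨α, _, ⟨⟨fα, hfα2, hfαv⟩, hmaps⟩⟩ := hx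
      have hinv : ∀ v, x (x v) = v := by
        intro v
        rw [hfαv (x v), hfαv v, map_sub, map_smul, smul_eq_mul, hfα2]
        module
      refine ⟨hmaps, fun β hβ => ?_⟩
      have hx : x⁻¹ β = x β := by
        show x.symm β = x β
        rw [x.symm_apply_eq, hinv]
      rw [hx]; exact hmaps β hβ
    | one => exact ⟨fun β hβ => by simpa using hβ, fun β hβ => by simpa using hβ⟩
    | mul x y hx hy px py =>
      refine ⟨fun β hβ => px.1 _ (py.1 β hβ), fun β hβ => ?_⟩
      rw [mul_inv_rev]
      exact py.2 _ (px.2 β hβ)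
    | inv x hx px => exact ⟨px.2, fun β hβ => by simpa using px.1 β hβ⟩
  exact (key w hw).1



variable {V : Type*} [AddCommGroup V] [Module ℝ V]

section Seg3
variable {S : Set V} {η γ : V} (n1 : ¬ η = 0) (n2 : ¬ γ = 0) (n3 : ¬ η = γ) (n4 : ¬ γ = η)
include n1 n2 n3 n4

lemma seg3_closed (hseg : IsSeg [η, η + γ, γ] S) (h1 : η ∈ S) (h3 : γ ∈ S) :
    η + γ ∈ S := by
  obtain ⟨k, hk, he | he⟩ := hseg
  all_goals have hk3 : k ≤ 3 := by simpa using hk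
  · have hm : γ ∈ {x | x ∈ ([η, η + γ, γ]).take k} := memL he ⟨h3, by simp⟩
    interval_cases k
    · simp at hm
    · simp at hm; tauto
    · simp at hm; tauto
    · exact (memR he (by simp)).1
  · have hm : η ∈ {x | x ∈ ([η, η + γ, γ]).drop k} := memL he ⟨h1, by simp⟩
    interval_cases k
    · exact (memR he (by simp)).1
    · simp at hm; tauto
    · simp at hm; tauto
    · simp at hm

lemma seg3_cocl (hseg : IsSeg [η, η + γ, γ] S) (h2 : η + γ ∈ S) : η ∈ S ∨ γ ∈ S := by
  obtain ⟨k, hk, he | he⟩ := hseg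
  all_goals have hk3 : k ≤ 3 := by simpa using hk
  · have hm : η + γ ∈ {x | x ∈ ([η, η + γ, γ]).take k} := memL he ⟨h2, by simp⟩
    interval_cases k
    · simp at hm
    · simp at hm; tauto
    · exact Or.inl (memR he (by simp)).1
    · exact Or.inl (memR he (by simp)).1
  · have hm : η + γ ∈ {x | x ∈ ([η, η + γ, γ]).drop k} := memL he ⟨h2, by simp⟩
    interval_cases k
    · exact Or.inr (memR he (by simp)).1
    · exact Or.inr (memR he (by simp)).1
    · simp at hm; tauto
    · simp at hm
end Seg3

section Seg4
variable {S : Set V} {η γ : V} (n1 : ¬ η = 0) (n2 : ¬ γ = 0) (n3 : ¬ η = γ) (n4 : ¬ γ = η)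
  (n5 : ¬ γ = (2:ℝ) • γ) (n6 : ¬ (2:ℝ) • γ = γ)
  (n7 : ¬ γ = η + (2:ℝ) • γ) (n8 : ¬ η + (2:ℝ) • γ = γ)
include n1 n2 n3 n4 n5 n6 n7 n8

lemma seg4_closed_a (hseg : IsSeg [η, η + γ, η + (2:ℝ) • γ, γ] S)
    (h1 : η ∈ S) (h4 : γ ∈ S) : η + γ ∈ S ∧ η + (2:ℝ) • γ ∈ S := by
  obtain ⟨k, hk, he | he⟩ := hseg
  all_goals have hk3 : k ≤ 4 := by simpa using hk
  · have hm : γ ∈ {x | x ∈ ([η, η + γ, η + (2:ℝ) • γ, γ]).take k} := memL he ⟨h4, by simp⟩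
    interval_cases k
    · simp at hm
    · simp at hm; tauto
    · simp at hm; tauto
    · simp at hm; tauto
    · exact ⟨(memR he (by simp)).1, (memR he (by simp)).1⟩
  · have hm : η ∈ {x | x ∈ ([η, η + γ, η + (2:ℝ) • γ, γ]).drop k} := memL he ⟨h1, by simp⟩
    interval_cases k
    · exact ⟨(memR he (by simp)).1, (memR he (by simp)).1⟩
    · simp at hm; tauto
    · simp at hm; tauto
    · simp at hm; tauto
    · simp at hm

lemma seg4_closed_b (hseg : IsSeg [η, η + γ, η + (2:ℝ) • γ, γ] S)
    (h2 : η + γ ∈ S) (h4 : γ ∈ S) : η + (2:ℝ) • γ ∈ S := by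
  obtain ⟨k, hk, he | he⟩ := hseg
  all_goals have hk3 : k ≤ 4 := by simpa using hk
  · have hm : γ ∈ {x | x ∈ ([η, η + γ, η + (2:ℝ) • γ, γ]).take k} := memL he ⟨h4, by simp⟩
    interval_cases k
    · simp at hm
    · simp at hm; tauto
    · simp at hm; tauto
    · simp at hm; tauto
    · exact (memR he (by simp)).1
  · have hm : η + γ ∈ {x | x ∈ ([η, η + γ, η + (2:ℝ) • γ, γ]).drop k} := memL he ⟨h2, by simp⟩
    interval_cases k
    · exact (memR he (by simp)).1
    · exact (memR he (by simp)).1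
    · simp at hm; tauto
    · simp at hm; tauto
    · simp at hm

lemma seg4_cocl_a (hseg : IsSeg [η, η + γ, η + (2:ℝ) • γ, γ] S)
    (h2 : η + γ ∈ S) : η ∈ S ∨ γ ∈ S := by
  obtain ⟨k, hk, he | he⟩ := hseg
  all_goals have hk3 : k ≤ 4 := by simpa using hk
  · have hm : η + γ ∈ {x | x ∈ ([η, η + γ, η + (2:ℝ) • γ, γ]).take k} := memL he ⟨h2, by simp⟩
    interval_cases k
    · simp at hm
    · simp at hm; tauto
    · exact Or.inl (memR he (by simp)).1
    · exact Or.inl (memR he (by simp)).1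
    · exact Or.inl (memR he (by simp)).1
  · have hm : η + γ ∈ {x | x ∈ ([η, η + γ, η + (2:ℝ) • γ, γ]).drop k} := memL he ⟨h2, by simp⟩
    interval_cases k
    · exact Or.inr (memR he (by simp)).1
    · exact Or.inr (memR he (by simp)).1
    · simp at hm; tauto
    · simp at hm; tauto
    · simp at hm

lemma seg4_cocl_b (hseg : IsSeg [η, η + γ, η + (2:ℝ) • γ, γ] S)
    (h3 : η + (2:ℝ) • γ ∈ S) : η + γ ∈ S ∨ γ ∈ S := by
  obtain ⟨k, hk, he | he⟩ := hseg
  all_goals have hk3 : k ≤ 4 := by simpa using hk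
  · have hm : η + (2:ℝ) • γ ∈ {x | x ∈ ([η, η + γ, η + (2:ℝ) • γ, γ]).take k} :=
      memL he ⟨h3, by simp⟩
    interval_cases k
    · simp at hm
    · simp at hm; tauto
    · simp at hm; tauto
    · exact Or.inl (memR he (by simp)).1
    · exact Or.inl (memR he (by simp)).1
  · have hm : η + (2:ℝ) • γ ∈ {x | x ∈ ([η, η + γ, η + (2:ℝ) • γ, γ]).drop k} :=
      memL he ⟨h3, by simp⟩
    interval_cases k
    · exact Or.inr (memR he (by simp)).1
    · exact Or.inr (memR he (by simp)).1
    · exact Or.inr (memR he (by simp)).1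
    · simp at hm; tauto
    · simp at hm
end Seg4


variable {V : Type*} [AddCommGroup V] [Module ℝ V]
section Dist
variable {Pos : Set V} (f : V →ₗ[ℝ] ℝ) (hf : ∀ α ∈ Pos, 0 < f α)
  {η γ : V}
include f hf

lemma dist3 (hred : ∀ α ∈ Pos, ∀ r : ℝ, r • α ∈ Pos → r = 1) (hη : η ∈ Pos) (hγ : γ ∈ Pos) (hm : η + γ ∈ Pos) :
    ¬ η = 0 ∧ ¬ γ = 0 ∧ ¬ η = γ ∧ ¬ γ = η := by
  have n1 := ne_zero_of_pos f hf hη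
  have n2 := ne_zero_of_pos f hf hγ
  have n3 : ¬ η = γ := by
    intro h
    have h2 : (2:ℝ) • γ ∈ Pos := by
      rw [show (2:ℝ) • γ = η + γ by rw [h]; module]; exact hm
    have := hred γ hγ 2 h2
    norm_num at this
  exact ⟨n1, n2, n3, fun h => n3 h.symm⟩

lemma dist4 (hη : η ∈ Pos) (hγ : γ ∈ Pos) (hm : η + γ ∈ Pos) :
    ¬ γ = (2:ℝ) • γ ∧ ¬ (2:ℝ) • γ = γ ∧ ¬ γ = η + (2:ℝ) • γ ∧ ¬ η + (2:ℝ) • γ = γ := by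
  have n2 := ne_zero_of_pos f hf hγ
  have n5 : ¬ γ = (2:ℝ) • γ := by
    intro h
    apply n2
    have h0 : (1:ℝ) • γ = 0 := by linear_combination (norm := module) -h
    simpa using h0
  have n7 : ¬ γ = η + (2:ℝ) • γ := by
    intro h
    have h0 : η + γ = 0 := by linear_combination (norm := module) -h
    have h1 : f (η + γ) = 0 := by rw [h0, map_zero]
    rw [map_add] at h1
    have := hf η hη; have := hf γ hγ
    linarith
  exact ⟨n5, fun h => n5 h.symm, n7, fun h => n7 h.symm⟩
end Dist

lemma cc_seg3 {Pos S : Set V} (f : V →ₗ[ℝ] ℝ) (hf : ∀ α ∈ Pos, 0 < f α)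
    (hred : ∀ α ∈ Pos, ∀ r : ℝ, r • α ∈ Pos → r = 1)
    (hcl : Closed Pos S) (hco : Coclosed Pos S) {η γ : V}
    (hηP : η ∈ Pos) (hγP : γ ∈ Pos) (hmP : η + γ ∈ Pos) :
    IsSeg [η, η + γ, γ] S := by
  obtain ⟨n1, n2, n3, n4⟩ := dist3 f hf hred hηP hγP hmP
  have r1 : η ∈ S → γ ∈ S → η + γ ∈ S := fun a b => hcl η γ hηP hγP hmP a b
  have r2 : η + γ ∈ S → η ∈ S ∨ γ ∈ S := fun a => hco η γ hηP hγP a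
  by_cases h1 : η ∈ S <;> by_cases h2 : η + γ ∈ S <;> by_cases h3 : γ ∈ S
  · exact ⟨3, by simp, Or.inl (by ext x; simp; aesop)⟩
  · exact ⟨2, by simp, Or.inl (by ext x; simp; aesop)⟩
  · exact absurd (r1 h1 h3) h2
  · exact ⟨1, by simp, Or.inl (by ext x; simp; aesop)⟩
  · exact ⟨1, by simp, Or.inr (by ext x; simp; aesop)⟩
  · rcases r2 h2 with h | h <;> contradiction
  · exact ⟨2, by simp, Or.inr (by ext x; simp; aesop)⟩
  · exact ⟨0, by simp, Or.inl (by ext x; simp; aesop)⟩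

lemma cc_seg4 {Pos S : Set V} (f : V →ₗ[ℝ] ℝ) (hf : ∀ α ∈ Pos, 0 < f α)
    (hred : ∀ α ∈ Pos, ∀ r : ℝ, r • α ∈ Pos → r = 1)
    (hcl : Closed Pos S) (hco : Coclosed Pos S) {η γ : V}
    (hηP : η ∈ Pos) (hγP : γ ∈ Pos) (hmP : η + γ ∈ Pos)
    (hbP : η + (2:ℝ) • γ ∈ Pos) :
    IsSeg [η, η + γ, η + (2:ℝ) • γ, γ] S := by
  obtain ⟨n1, n2, n3, n4⟩ := dist3 f hf hred hηP hγP hmP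
  have heq : (η + γ) + γ = η + (2:ℝ) • γ := by module
  have hbP' : (η + γ) + γ ∈ Pos := by rw [heq]; exact hbP
  have r1 : η ∈ S → γ ∈ S → η + γ ∈ S := fun a b => hcl η γ hηP hγP hmP a b
  have r2 : η + γ ∈ S → γ ∈ S → η + (2:ℝ) • γ ∈ S := fun a b => by
    have := hcl (η + γ) γ hmP hγP hbP' a b
    rwa [heq] at this
  have r3 : η + γ ∈ S → η ∈ S ∨ γ ∈ S := fun a => hco η γ hηP hγP a
  have r4 : η + (2:ℝ) • γ ∈ S → η + γ ∈ S ∨ γ ∈ S := fun a =>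
    hco (η + γ) γ hmP hγP (by rwa [← heq] at a)
  by_cases h1 : η ∈ S <;> by_cases h2 : η + γ ∈ S <;>
    by_cases h3 : η + (2:ℝ) • γ ∈ S <;> by_cases h4 : γ ∈ S
  · exact ⟨4, by simp, Or.inl (by ext x; simp; aesop)⟩
  · exact ⟨3, by simp, Or.inl (by ext x; simp; aesop)⟩
  · exact absurd (r2 h2 h4) h3
  · exact ⟨2, by simp, Or.inl (by ext x; simp; aesop)⟩
  · exact absurd (r1 h1 h4) h2
  · rcases r4 h3 with h | h <;> contradiction
  · exact absurd (r1 h1 h4) h2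
  · exact ⟨1, by simp, Or.inl (by ext x; simp; aesop)⟩
  · exact ⟨1, by simp, Or.inr (by ext x; simp; aesop)⟩
  · rcases r3 h2 with h | h <;> contradiction
  · exact absurd (r2 h2 h4) h3
  · rcases r3 h2 with h | h <;> contradiction
  · exact ⟨2, by simp, Or.inr (by ext x; simp; aesop)⟩
  · rcases r4 h3 with h | h <;> contradiction
  · exact ⟨3, by simp, Or.inr (by ext x; simp; aesop)⟩
  · exact ⟨0, by simp, Or.inl (by ext x; simp; aesop)⟩

lemma closure_maps' : True := trivial

lemma inv_cc {Pos Φ : Set V} (hΦ : Φ = Pos ∪ (fun x => -x) '' Pos)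
    (f : V →ₗ[ℝ] ℝ) (hf : ∀ α ∈ Pos, 0 < f α)
    (w : V ≃ₗ[ℝ] V) (hwΦ : ∀ β ∈ Φ, w β ∈ Φ) :
    Closed Pos {α | α ∈ Pos ∧ -(w α) ∈ Pos} ∧
      Coclosed Pos {α | α ∈ Pos ∧ -(w α) ∈ Pos} := by
  have himg : ∀ x : V, x ∈ (fun y => -y) '' Pos ↔ -x ∈ Pos := by
    intro x
    constructor
    · rintro ⟨p, hp, rfl⟩; simpa using hp
    · intro h; exact ⟨-x, h, by simp⟩
  constructor
  · rintro β γ hβ hγ hsum ⟨-, h1⟩ ⟨-, h2⟩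
    refine ⟨hsum, ?_⟩
    have hm : w (β + γ) ∈ Φ := hwΦ _ (by rw [hΦ]; exact Or.inl hsum)
    rw [hΦ] at hm
    rcases hm with h | h
    · exfalso
      have e : f (w (β + γ)) + f (-(w β)) + f (-(w γ)) = 0 := by
        simp only [map_add, map_neg]; ring
      have := hf _ h; have := hf _ h1; have := hf _ h2
      linarith
    · exact (himg _).mp h
  · rintro β γ hβ hγ ⟨-, hsum⟩
    by_contra hcon
    rw [not_or] at hcon
    have hnb : ¬ -(w β) ∈ Pos := fun h => hcon.1 ⟨hβ, h⟩
    have hnc : ¬ -(w γ) ∈ Pos := fun h => hcon.2 ⟨hγ, h⟩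
    have hwβ : w β ∈ Pos := by
      have : w β ∈ Φ := hwΦ _ (by rw [hΦ]; exact Or.inl hβ)
      rw [hΦ] at this
      rcases this with h | h
      · exact h
      · exact absurd ((himg _).mp h) hnb
    have hwγ : w γ ∈ Pos := by
      have : w γ ∈ Φ := hwΦ _ (by rw [hΦ]; exact Or.inl hγ)
      rw [hΦ] at this
      rcases this with h | h
      · exact h
      · exact absurd ((himg _).mp h) hnc
    have e : f (-(w (β + γ))) + f (w β) + f (w γ) = 0 := by
      simp only [map_add, map_neg]; ring
    have := hf _ hsum; have := hf _ hwβ; have := hf _ hwγ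
    linarith


lemma pair_cases {Pos : Set V} (f : V →ₗ[ℝ] ℝ) (hf : ∀ α ∈ Pos, 0 < f α)
    (hred : ∀ α ∈ Pos, ∀ r : ℝ, r • α ∈ Pos → r = 1)
    (hrank2 : ∀ a ∈ Pos, ∀ b ∈ Pos, a ≠ b → ∃ η γ : V,
        Pos ∩ (Submodule.span ℝ {a, b} : Set V) = {η, γ} ∨
        Pos ∩ (Submodule.span ℝ {a, b} : Set V) = {η, η + γ, γ} ∨
        Pos ∩ (Submodule.span ℝ {a, b} : Set V) = {η, η + γ, η + (2 : ℝ) • γ, γ})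
    {β γ : V} (hβ : β ∈ Pos) (hγ : γ ∈ Pos) (hne : β ≠ γ) (hsum : β + γ ∈ Pos) :
    ∃ η γ₀ : V, η ∈ Pos ∧ γ₀ ∈ Pos ∧ η + γ₀ ∈ Pos ∧
      ((Pos ∩ (Submodule.span ℝ {η, γ₀} : Set V) = {η, η + γ₀, γ₀} ∧
         ((β = η ∧ γ = γ₀) ∨ (β = γ₀ ∧ γ = η)))
       ∨ (Pos ∩ (Submodule.span ℝ {η, γ₀} : Set V) = {η, η + γ₀, η + (2:ℝ) • γ₀, γ₀} ∧
          ((β = η ∧ γ = γ₀) ∨ (β = γ₀ ∧ γ = η) ∨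
           (β = η + γ₀ ∧ γ = γ₀) ∨ (β = γ₀ ∧ γ = η + γ₀)))) := by
  obtain ⟨η, γ₀, hc | hc | hc⟩ := hrank2 β hβ γ hγ hne
  all_goals
    have hm1 : β ∈ Pos ∩ (Submodule.span ℝ {β, γ} : Set V) :=
      ⟨hβ, Submodule.subset_span (by simp)⟩
    have hm2 : γ ∈ Pos ∩ (Submodule.span ℝ {β, γ} : Set V) :=
      ⟨hγ, Submodule.subset_span (by simp)⟩
    have hm3 : β + γ ∈ Pos ∩ (Submodule.span ℝ {β, γ} : Set V) :=
      ⟨hsum, Submodule.add_mem _ (Submodule.subset_span (by simp))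
        (Submodule.subset_span (by simp))⟩
    rw [hc] at hm1 hm2 hm3
    simp only [Set.mem_insert_iff, Set.mem_singleton_iff] at hm1 hm2 hm3
  · exfalso
    have hβ0 : β ≠ β + γ := fun h => ne_zero_of_pos f hf hγ (left_eq_add.mp h)
    have hγ0 : γ ≠ β + γ := fun h => ne_zero_of_pos f hf hβ (right_eq_add.mp h)
    exact three_ne_two hm1 hm2 hm3 hne hβ0 hγ0
  · have hsub : ({η, η + γ₀, γ₀} : Set V) ⊆ Pos := by
      rw [← hc]; exact Set.inter_subset_left
    have hη0P : η ∈ Pos := hsub (by simp)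
    have hγ₀P : γ₀ ∈ Pos := hsub (by simp)
    have hm0P : η + γ₀ ∈ Pos := hsub (by simp)
    obtain ⟨d1, d2, d3, d4⟩ := dist3 f hf hred hη0P hγ₀P hm0P
    have hindep : ∀ a b : ℝ, a • η + b • γ₀ = 0 → a = 0 ∧ b = 0 :=
      fun a b h => indep f hf hred hη0P hγ₀P d3 a b h
    have hcs : ({η, η + γ₀, γ₀} : Set V) ⊆ (Submodule.span ℝ ({η, γ₀} : Set V) : Set V) := by
      rintro x hx
      simp only [Set.mem_insert_iff, Set.mem_singleton_iff] at hx
      rcases hx with rfl | rfl | rfl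
      · exact Submodule.subset_span (by simp)
      · exact Submodule.add_mem _ (Submodule.subset_span (by simp)) (Submodule.subset_span (by simp))
      · exact Submodule.subset_span (by simp)
    have hsp : Submodule.span ℝ ({η, γ₀} : Set V) = Submodule.span ℝ ({β, γ} : Set V) := by
      apply le_antisymm
      · rw [Submodule.span_le]
        rintro x hx
        simp only [Set.mem_insert_iff, Set.mem_singleton_iff] at hx
        rcases hx with rfl | rfl
        · exact (show x ∈ Pos ∩ (Submodule.span ℝ ({β, γ} : Set V) : Set V) from by
            rw [hc]; simp).2
        · exact (show x ∈ Pos ∩ (Submodule.span ℝ ({β, γ} : Set V) : Set V) from by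
            rw [hc]; simp).2
      · rw [Submodule.span_le]
        rintro x hx
        simp only [Set.mem_insert_iff, Set.mem_singleton_iff] at hx
        rcases hx with rfl | rfl
        · exact hcs (by simp only [Set.mem_insert_iff, Set.mem_singleton_iff]; exact hm1)
        · exact hcs (by simp only [Set.mem_insert_iff, Set.mem_singleton_iff]; exact hm2)
    have hc' : Pos ∩ (Submodule.span ℝ ({η, γ₀} : Set V) : Set V) = {η, η + γ₀, γ₀} := by
      rw [hsp]; exact hc
    refine ⟨η, γ₀, hη0P, hγ₀P, hm0P, Or.inl ⟨hc', ?_⟩⟩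
    rcases hm1 with rfl | rfl | rfl <;> rcases hm2 with rfl | rfl | rfl
    · -- β = η, γ = η
      exact absurd rfl hne
    · -- β = η, γ = η + γ₀
      exfalso
      rcases hm3 with h | h | h
      · exact absurd (hindep 1 1 (by linear_combination (norm := module) h)).1 (by norm_num)
      · exact absurd (hindep 1 0 (by linear_combination (norm := module) h)).1 (by norm_num)
      · exact absurd (hindep 2 0 (by linear_combination (norm := module) h)).1 (by norm_num)
    · -- β = η, γ = γ₀
      exact Or.inl ⟨rfl, rfl⟩
    · -- β = η + γ₀, γ = η
      exfalso
      rcases hm3 with h | h | h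
      · exact absurd (hindep 1 1 (by linear_combination (norm := module) h)).1 (by norm_num)
      · exact absurd (hindep 1 0 (by linear_combination (norm := module) h)).1 (by norm_num)
      · exact absurd (hindep 2 0 (by linear_combination (norm := module) h)).1 (by norm_num)
    · -- β = η + γ₀, γ = η + γ₀
      exact absurd rfl hne
    · -- β = η + γ₀, γ = γ₀
      exfalso
      rcases hm3 with h | h | h
      · exact absurd (hindep 0 2 (by linear_combination (norm := module) h)).2 (by norm_num)
      · exact absurd (hindep 0 1 (by linear_combination (norm := module) h)).2 (by norm_num)
      · exact absurd (hindep 1 1 (by linear_combination (norm := module) h)).1 (by norm_num)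
    · -- β = γ₀, γ = η
      exact Or.inr ⟨rfl, rfl⟩
    · -- β = γ₀, γ = η + γ₀
      exfalso
      rcases hm3 with h | h | h
      · exact absurd (hindep 0 2 (by linear_combination (norm := module) h)).2 (by norm_num)
      · exact absurd (hindep 0 1 (by linear_combination (norm := module) h)).2 (by norm_num)
      · exact absurd (hindep 1 1 (by linear_combination (norm := module) h)).1 (by norm_num)
    · -- β = γ₀, γ = γ₀
      exact absurd rfl hne
  · have hsub : ({η, η + γ₀, η + (2:ℝ) • γ₀, γ₀} : Set V) ⊆ Pos := by
      rw [← hc]; exact Set.inter_subset_left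
    have hη0P : η ∈ Pos := hsub (by simp)
    have hγ₀P : γ₀ ∈ Pos := hsub (by simp)
    have hm0P : η + γ₀ ∈ Pos := hsub (by simp)
    obtain ⟨d1, d2, d3, d4⟩ := dist3 f hf hred hη0P hγ₀P hm0P
    have hindep : ∀ a b : ℝ, a • η + b • γ₀ = 0 → a = 0 ∧ b = 0 :=
      fun a b h => indep f hf hred hη0P hγ₀P d3 a b h
    have hcs : ({η, η + γ₀, η + (2:ℝ) • γ₀, γ₀} : Set V) ⊆ (Submodule.span ℝ ({η, γ₀} : Set V) : Set V) := by
      rintro x hx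
      simp only [Set.mem_insert_iff, Set.mem_singleton_iff] at hx
      rcases hx with rfl | rfl | rfl | rfl
      · exact Submodule.subset_span (by simp)
      · exact Submodule.add_mem _ (Submodule.subset_span (by simp)) (Submodule.subset_span (by simp))
      · exact Submodule.add_mem _ (Submodule.subset_span (by simp)) (Submodule.smul_mem _ _ (Submodule.subset_span (by simp)))
      · exact Submodule.subset_span (by simp)
    have hsp : Submodule.span ℝ ({η, γ₀} : Set V) = Submodule.span ℝ ({β, γ} : Set V) := by
      apply le_antisymm
      · rw [Submodule.span_le]
        rintro x hx
        simp only [Set.mem_insert_iff, Set.mem_singleton_iff] at hx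
        rcases hx with rfl | rfl
        · exact (show x ∈ Pos ∩ (Submodule.span ℝ ({β, γ} : Set V) : Set V) from by
            rw [hc]; simp).2
        · exact (show x ∈ Pos ∩ (Submodule.span ℝ ({β, γ} : Set V) : Set V) from by
            rw [hc]; simp).2
      · rw [Submodule.span_le]
        rintro x hx
        simp only [Set.mem_insert_iff, Set.mem_singleton_iff] at hx
        rcases hx with rfl | rfl
        · exact hcs (by simp only [Set.mem_insert_iff, Set.mem_singleton_iff]; exact hm1)
        · exact hcs (by simp only [Set.mem_insert_iff, Set.mem_singleton_iff]; exact hm2)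
    have hc' : Pos ∩ (Submodule.span ℝ ({η, γ₀} : Set V) : Set V) = {η, η + γ₀, η + (2:ℝ) • γ₀, γ₀} := by
      rw [hsp]; exact hc
    refine ⟨η, γ₀, hη0P, hγ₀P, hm0P, Or.inr ⟨hc', ?_⟩⟩
    rcases hm1 with rfl | rfl | rfl | rfl <;> rcases hm2 with rfl | rfl | rfl | rfl
    · -- β = η, γ = η
      exact absurd rfl hne
    · -- β = η, γ = η + γ₀
      exfalso
      rcases hm3 with h | h | h | h
      · exact absurd (hindep 1 1 (by linear_combination (norm := module) h)).1 (by norm_num)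
      · exact absurd (hindep 1 0 (by linear_combination (norm := module) h)).1 (by norm_num)
      · exact absurd (hindep 1 (-1) (by linear_combination (norm := module) h)).1 (by norm_num)
      · exact absurd (hindep 2 0 (by linear_combination (norm := module) h)).1 (by norm_num)
    · -- β = η, γ = η + (2:ℝ) • γ₀
      exfalso
      rcases hm3 with h | h | h | h
      · exact absurd (hindep 1 2 (by linear_combination (norm := module) h)).1 (by norm_num)
      · exact absurd (hindep 1 1 (by linear_combination (norm := module) h)).1 (by norm_num)
      · exact absurd (hindep 1 0 (by linear_combination (norm := module) h)).1 (by norm_num)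
      · exact absurd (hindep 2 1 (by linear_combination (norm := module) h)).1 (by norm_num)
    · -- β = η, γ = γ₀
      exact Or.inl ⟨rfl, rfl⟩
    · -- β = η + γ₀, γ = η
      exfalso
      rcases hm3 with h | h | h | h
      · exact absurd (hindep 1 1 (by linear_combination (norm := module) h)).1 (by norm_num)
      · exact absurd (hindep 1 0 (by linear_combination (norm := module) h)).1 (by norm_num)
      · exact absurd (hindep 1 (-1) (by linear_combination (norm := module) h)).1 (by norm_num)
      · exact absurd (hindep 2 0 (by linear_combination (norm := module) h)).1 (by norm_num)
    · -- β = η + γ₀, γ = η + γ₀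
      exact absurd rfl hne
    · -- β = η + γ₀, γ = η + (2:ℝ) • γ₀
      exfalso
      rcases hm3 with h | h | h | h
      · exact absurd (hindep 1 3 (by linear_combination (norm := module) h)).1 (by norm_num)
      · exact absurd (hindep 1 2 (by linear_combination (norm := module) h)).1 (by norm_num)
      · exact absurd (hindep 1 1 (by linear_combination (norm := module) h)).1 (by norm_num)
      · exact absurd (hindep 2 2 (by linear_combination (norm := module) h)).1 (by norm_num)
    · -- β = η + γ₀, γ = γ₀
      exact Or.inr (Or.inr (Or.inl ⟨rfl, rfl⟩))
    · -- β = η + (2:ℝ) • γ₀, γ = η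
      exfalso
      rcases hm3 with h | h | h | h
      · exact absurd (hindep 1 2 (by linear_combination (norm := module) h)).1 (by norm_num)
      · exact absurd (hindep 1 1 (by linear_combination (norm := module) h)).1 (by norm_num)
      · exact absurd (hindep 1 0 (by linear_combination (norm := module) h)).1 (by norm_num)
      · exact absurd (hindep 2 1 (by linear_combination (norm := module) h)).1 (by norm_num)
    · -- β = η + (2:ℝ) • γ₀, γ = η + γ₀
      exfalso
      rcases hm3 with h | h | h | h
      · exact absurd (hindep 1 3 (by linear_combination (norm := module) h)).1 (by norm_num)
      · exact absurd (hindep 1 2 (by linear_combination (norm := module) h)).1 (by norm_num)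
      · exact absurd (hindep 1 1 (by linear_combination (norm := module) h)).1 (by norm_num)
      · exact absurd (hindep 2 2 (by linear_combination (norm := module) h)).1 (by norm_num)
    · -- β = η + (2:ℝ) • γ₀, γ = η + (2:ℝ) • γ₀
      exact absurd rfl hne
    · -- β = η + (2:ℝ) • γ₀, γ = γ₀
      exfalso
      rcases hm3 with h | h | h | h
      · exact absurd (hindep 0 3 (by linear_combination (norm := module) h)).2 (by norm_num)
      · exact absurd (hindep 0 2 (by linear_combination (norm := module) h)).2 (by norm_num)
      · exact absurd (hindep 0 1 (by linear_combination (norm := module) h)).2 (by norm_num)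
      · exact absurd (hindep 1 2 (by linear_combination (norm := module) h)).1 (by norm_num)
    · -- β = γ₀, γ = η
      exact Or.inr (Or.inl ⟨rfl, rfl⟩)
    · -- β = γ₀, γ = η + γ₀
      exact Or.inr (Or.inr (Or.inr ⟨rfl, rfl⟩))
    · -- β = γ₀, γ = η + (2:ℝ) • γ₀
      exfalso
      rcases hm3 with h | h | h | h
      · exact absurd (hindep 0 3 (by linear_combination (norm := module) h)).2 (by norm_num)
      · exact absurd (hindep 0 2 (by linear_combination (norm := module) h)).2 (by norm_num)
      · exact absurd (hindep 0 1 (by linear_combination (norm := module) h)).2 (by norm_num)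
      · exact absurd (hindep 1 2 (by linear_combination (norm := module) h)).1 (by norm_num)
    · -- β = γ₀, γ = γ₀
      exact absurd rfl hne

lemma seg_closed {Pos S : Set V} (f : V →ₗ[ℝ] ℝ) (hf : ∀ α ∈ Pos, 0 < f α)
    (hred : ∀ α ∈ Pos, ∀ r : ℝ, r • α ∈ Pos → r = 1)
    (hrank2 : ∀ a ∈ Pos, ∀ b ∈ Pos, a ≠ b → ∃ η γ : V,
        Pos ∩ (Submodule.span ℝ {a, b} : Set V) = {η, γ} ∨
        Pos ∩ (Submodule.span ℝ {a, b} : Set V) = {η, η + γ, γ} ∨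
        Pos ∩ (Submodule.span ℝ {a, b} : Set V) = {η, η + γ, η + (2 : ℝ) • γ, γ})
    (hseg : ∀ η γ : V,
        (Pos ∩ (Submodule.span ℝ {η, γ} : Set V) = {η, η + γ, γ} →
          IsSeg [η, η + γ, γ] S) ∧
        (Pos ∩ (Submodule.span ℝ {η, γ} : Set V) = {η, η + γ, η + (2 : ℝ) • γ, γ} →
          IsSeg [η, η + γ, η + (2 : ℝ) • γ, γ] S)) :
    Closed Pos S := by
  intro β γ hβ hγ hsum hβS hγS
  have hne : β ≠ γ := by
    rintro rfl
    have h2 : (2:ℝ) • β ∈ Pos := by rw [two_smul]; exact hsum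
    have := hred β hβ 2 h2
    norm_num at this
  obtain ⟨η, γ₀, hη0P, hγ₀P, hm0P, hcase⟩ := pair_cases f hf hred hrank2 hβ hγ hne hsum
  obtain ⟨d1, d2, d3, d4⟩ := dist3 f hf hred hη0P hγ₀P hm0P
  rcases hcase with ⟨hc', hid⟩ | ⟨hc', hid⟩
  · have hs3 := (hseg η γ₀).1 hc'
    rcases hid with ⟨hb, hg⟩ | ⟨hb, hg⟩
    · rw [hb] at hβS; rw [hg] at hγS; rw [hb, hg]
      exact seg3_closed d1 d2 d3 d4 hs3 hβS hγS
    · rw [hb] at hβS; rw [hg] at hγS; rw [hb, hg, add_comm]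
      exact seg3_closed d1 d2 d3 d4 hs3 hγS hβS
  · have hs4 := (hseg η γ₀).2 hc'
    obtain ⟨d5, d6, d7, d8⟩ := dist4 f hf hη0P hγ₀P hm0P
    rcases hid with ⟨hb, hg⟩ | ⟨hb, hg⟩ | ⟨hb, hg⟩ | ⟨hb, hg⟩ <;>
      rw [hb] at hβS <;> rw [hg] at hγS <;> rw [hb, hg]
    · exact (seg4_closed_a d1 d2 d3 d4 d5 d6 d7 d8 hs4 hβS hγS).1
    · rw [add_comm]; exact (seg4_closed_a d1 d2 d3 d4 d5 d6 d7 d8 hs4 hγS hβS).1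
    · rw [show (η + γ₀) + γ₀ = η + (2:ℝ) • γ₀ by module]
      exact seg4_closed_b d1 d2 d3 d4 d5 d6 d7 d8 hs4 hβS hγS
    · rw [show γ₀ + (η + γ₀) = η + (2:ℝ) • γ₀ by module]
      exact seg4_closed_b d1 d2 d3 d4 d5 d6 d7 d8 hs4 hγS hβS

lemma seg_cocl {Pos S : Set V} (f : V →ₗ[ℝ] ℝ) (hf : ∀ α ∈ Pos, 0 < f α)
    (hred : ∀ α ∈ Pos, ∀ r : ℝ, r • α ∈ Pos → r = 1)
    (hrank2 : ∀ a ∈ Pos, ∀ b ∈ Pos, a ≠ b → ∃ η γ : V,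
        Pos ∩ (Submodule.span ℝ {a, b} : Set V) = {η, γ} ∨
        Pos ∩ (Submodule.span ℝ {a, b} : Set V) = {η, η + γ, γ} ∨
        Pos ∩ (Submodule.span ℝ {a, b} : Set V) = {η, η + γ, η + (2 : ℝ) • γ, γ})
    (hS : S ⊆ Pos)
    (hseg : ∀ η γ : V,
        (Pos ∩ (Submodule.span ℝ {η, γ} : Set V) = {η, η + γ, γ} →
          IsSeg [η, η + γ, γ] S) ∧
        (Pos ∩ (Submodule.span ℝ {η, γ} : Set V) = {η, η + γ, η + (2 : ℝ) • γ, γ} →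
          IsSeg [η, η + γ, η + (2 : ℝ) • γ, γ] S)) :
    Coclosed Pos S := by
  intro β γ hβ hγ hsumS
  have hsum : β + γ ∈ Pos := hS hsumS
  have hne : β ≠ γ := by
    rintro rfl
    have h2 : (2:ℝ) • β ∈ Pos := by rw [two_smul]; exact hsum
    have := hred β hβ 2 h2
    norm_num at this
  obtain ⟨η, γ₀, hη0P, hγ₀P, hm0P, hcase⟩ := pair_cases f hf hred hrank2 hβ hγ hne hsum
  obtain ⟨d1, d2, d3, d4⟩ := dist3 f hf hred hη0P hγ₀P hm0P
  rcases hcase with ⟨hc', hid⟩ | ⟨hc', hid⟩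
  · have hs3 := (hseg η γ₀).1 hc'
    rcases hid with ⟨hb, hg⟩ | ⟨hb, hg⟩ <;> rw [hb, hg] at hsumS ⊢
    · exact seg3_cocl d1 d2 d3 d4 hs3 hsumS
    · exact (seg3_cocl d1 d2 d3 d4 hs3 (by rwa [add_comm] at hsumS)).symm
  · have hs4 := (hseg η γ₀).2 hc'
    obtain ⟨d5, d6, d7, d8⟩ := dist4 f hf hη0P hγ₀P hm0P
    rcases hid with ⟨hb, hg⟩ | ⟨hb, hg⟩ | ⟨hb, hg⟩ | ⟨hb, hg⟩ <;> rw [hb, hg] at hsumS ⊢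
    · exact seg4_cocl_a d1 d2 d3 d4 d5 d6 d7 d8 hs4 hsumS
    · exact (seg4_cocl_a d1 d2 d3 d4 d5 d6 d7 d8 hs4 (by rwa [add_comm] at hsumS)).symm
    · exact seg4_cocl_b d1 d2 d3 d4 d5 d6 d7 d8 hs4
        (by rwa [show (η + γ₀) + γ₀ = η + (2:ℝ) • γ₀ by module] at hsumS)
    · exact (seg4_cocl_b d1 d2 d3 d4 d5 d6 d7 d8 hs4
        (by rwa [show γ₀ + (η + γ₀) = η + (2:ℝ) • γ₀ by module] at hsumS)).symm


lemma refl_pos {Pos : Set V} (f : V →ₗ[ℝ] ℝ) (hf : ∀ α ∈ Pos, 0 < f α)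
    (hred : ∀ α ∈ Pos, ∀ r : ℝ, r • α ∈ Pos → r = 1)
    (hrank2 : ∀ a ∈ Pos, ∀ b ∈ Pos, a ≠ b → ∃ η γ : V,
        Pos ∩ (Submodule.span ℝ {a, b} : Set V) = {η, γ} ∨
        Pos ∩ (Submodule.span ℝ {a, b} : Set V) = {η, η + γ, γ} ∨
        Pos ∩ (Submodule.span ℝ {a, b} : Set V) = {η, η + γ, η + (2 : ℝ) • γ, γ})
    {α : V} (hα : α ∈ Pos)
    (hindec : ¬ ∃ β γ : V, β ∈ Pos ∧ γ ∈ Pos ∧ β + γ = α)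
    {β : V} (hβ : β ∈ Pos) (hne : α ≠ β)
    {c : ℝ} (hneg : c • α - β ∈ Pos) : False := by
  have notscal : ∀ r : ℝ, β ≠ r • α := by
    intro r h
    have hr := hred α hα r (h ▸ hβ)
    rw [hr, one_smul] at h
    exact hne h.symm
  obtain ⟨η, γ₀, hc | hc | hc⟩ := hrank2 α hα β hβ hne
  all_goals
    have hm1 : α ∈ Pos ∩ (Submodule.span ℝ {α, β} : Set V) :=
      ⟨hα, Submodule.subset_span (by simp)⟩
    have hm2 : β ∈ Pos ∩ (Submodule.span ℝ {α, β} : Set V) :=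
      ⟨hβ, Submodule.subset_span (by simp)⟩
    have hm3 : c • α - β ∈ Pos ∩ (Submodule.span ℝ {α, β} : Set V) :=
      ⟨hneg, Submodule.sub_mem _
        (Submodule.smul_mem _ _ (Submodule.subset_span (by simp)))
        (Submodule.subset_span (by simp))⟩
    rw [hc] at hm1 hm2 hm3
    simp only [Set.mem_insert_iff, Set.mem_singleton_iff] at hm1 hm2 hm3
  · -- two element case
    rcases hm1 with rfl | rfl <;> rcases hm2 with rfl | rfl <;> rcases hm3 with h | h
    all_goals first
      | exact hne rfl
      | (exact notscal (c - 1) (by linear_combination (norm := module) -h))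
      | (apply notscal ((2:ℝ)⁻¹ * c)
         have h2 : (2:ℝ) • β = c • α := by linear_combination (norm := module) -h
         rw [← smul_smul, ← h2, smul_smul]
         norm_num)
  · have hsub : ({η, η + γ₀, γ₀} : Set V) ⊆ Pos := by
      rw [← hc]; exact Set.inter_subset_left
    have hη0P : η ∈ Pos := hsub (by simp)
    have hγ₀P : γ₀ ∈ Pos := hsub (by simp)
    have hm0P : η + γ₀ ∈ Pos := hsub (by simp)
    obtain ⟨d1, d2, d3, d4⟩ := dist3 f hf hred hη0P hγ₀P hm0P
    have hindep : ∀ a b : ℝ, a • η + b • γ₀ = 0 → a = 0 ∧ b = 0 :=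
      fun a b h => indep f hf hred hη0P hγ₀P d3 a b h
    rcases hm1 with rfl | rfl | rfl
    · -- α = η
      rcases hm2 with rfl | rfl | rfl
      · -- β = η
        exact hne rfl
      · -- β = η + γ₀
        rcases hm3 with h | h | h
        · exact absurd (hindep (c - 2) (-1 : ℝ) (by linear_combination (norm := module) h)).2 (by norm_num)
        · exact absurd (hindep (c - 2) (-2 : ℝ) (by linear_combination (norm := module) h)).2 (by norm_num)
        · exact absurd (hindep (c - 1) (-2 : ℝ) (by linear_combination (norm := module) h)).2 (by norm_num)
      · -- β = γ₀
        rcases hm3 with h | h | h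
        · exact absurd (hindep (c - 1) (-1 : ℝ) (by linear_combination (norm := module) h)).2 (by norm_num)
        · exact absurd (hindep (c - 1) (-2 : ℝ) (by linear_combination (norm := module) h)).2 (by norm_num)
        · exact absurd (hindep c (-2 : ℝ) (by linear_combination (norm := module) h)).2 (by norm_num)
    · -- α = η + γ₀
      exact hindec ⟨η, γ₀, hη0P, hγ₀P, rfl⟩
    · -- α = γ₀
      rcases hm2 with rfl | rfl | rfl
      · -- β = η
        rcases hm3 with h | h | h
        · exact absurd (hindep (-2 : ℝ) c (by linear_combination (norm := module) h)).1 (by norm_num)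
        · exact absurd (hindep (-2 : ℝ) (c - 1) (by linear_combination (norm := module) h)).1 (by norm_num)
        · exact absurd (hindep (-1 : ℝ) (c - 1) (by linear_combination (norm := module) h)).1 (by norm_num)
      · -- β = η + γ₀
        rcases hm3 with h | h | h
        · exact absurd (hindep (-2 : ℝ) (c - 1) (by linear_combination (norm := module) h)).1 (by norm_num)
        · exact absurd (hindep (-2 : ℝ) (c - 2) (by linear_combination (norm := module) h)).1 (by norm_num)
        · exact absurd (hindep (-1 : ℝ) (c - 2) (by linear_combination (norm := module) h)).1 (by norm_num)
      · -- β = γ₀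
        exact hne rfl
  · have hsub : ({η, η + γ₀, η + (2:ℝ) • γ₀, γ₀} : Set V) ⊆ Pos := by
      rw [← hc]; exact Set.inter_subset_left
    have hη0P : η ∈ Pos := hsub (by simp)
    have hγ₀P : γ₀ ∈ Pos := hsub (by simp)
    have hm0P : η + γ₀ ∈ Pos := hsub (by simp)
    obtain ⟨d1, d2, d3, d4⟩ := dist3 f hf hred hη0P hγ₀P hm0P
    have hindep : ∀ a b : ℝ, a • η + b • γ₀ = 0 → a = 0 ∧ b = 0 :=
      fun a b h => indep f hf hred hη0P hγ₀P d3 a b h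
    rcases hm1 with rfl | rfl | rfl | rfl
    · -- α = η
      rcases hm2 with rfl | rfl | rfl | rfl
      · -- β = η
        exact hne rfl
      · -- β = η + γ₀
        rcases hm3 with h | h | h | h
        · exact absurd (hindep (c - 2) (-1 : ℝ) (by linear_combination (norm := module) h)).2 (by norm_num)
        · exact absurd (hindep (c - 2) (-2 : ℝ) (by linear_combination (norm := module) h)).2 (by norm_num)
        · exact absurd (hindep (c - 2) (-3 : ℝ) (by linear_combination (norm := module) h)).2 (by norm_num)
        · exact absurd (hindep (c - 1) (-2 : ℝ) (by linear_combination (norm := module) h)).2 (by norm_num)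
      · -- β = η + (2:ℝ) • γ₀
        rcases hm3 with h | h | h | h
        · exact absurd (hindep (c - 2) (-2 : ℝ) (by linear_combination (norm := module) h)).2 (by norm_num)
        · exact absurd (hindep (c - 2) (-3 : ℝ) (by linear_combination (norm := module) h)).2 (by norm_num)
        · exact absurd (hindep (c - 2) (-4 : ℝ) (by linear_combination (norm := module) h)).2 (by norm_num)
        · exact absurd (hindep (c - 1) (-3 : ℝ) (by linear_combination (norm := module) h)).2 (by norm_num)
      · -- β = γ₀
        rcases hm3 with h | h | h | h
        · exact absurd (hindep (c - 1) (-1 : ℝ) (by linear_combination (norm := module) h)).2 (by norm_num)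
        · exact absurd (hindep (c - 1) (-2 : ℝ) (by linear_combination (norm := module) h)).2 (by norm_num)
        · exact absurd (hindep (c - 1) (-3 : ℝ) (by linear_combination (norm := module) h)).2 (by norm_num)
        · exact absurd (hindep c (-2 : ℝ) (by linear_combination (norm := module) h)).2 (by norm_num)
    · -- α = η + γ₀
      exact hindec ⟨η, γ₀, hη0P, hγ₀P, rfl⟩
    · -- α = η + (2:ℝ) • γ₀
      exact hindec ⟨η + γ₀, γ₀, hm0P, hγ₀P, by module⟩
    · -- α = γ₀
      rcases hm2 with rfl | rfl | rfl | rfl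
      · -- β = η
        rcases hm3 with h | h | h | h
        · exact absurd (hindep (-2 : ℝ) c (by linear_combination (norm := module) h)).1 (by norm_num)
        · exact absurd (hindep (-2 : ℝ) (c - 1) (by linear_combination (norm := module) h)).1 (by norm_num)
        · exact absurd (hindep (-2 : ℝ) (c - 2) (by linear_combination (norm := module) h)).1 (by norm_num)
        · exact absurd (hindep (-1 : ℝ) (c - 1) (by linear_combination (norm := module) h)).1 (by norm_num)
      · -- β = η + γ₀
        rcases hm3 with h | h | h | h
        · exact absurd (hindep (-2 : ℝ) (c - 1) (by linear_combination (norm := module) h)).1 (by norm_num)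
        · exact absurd (hindep (-2 : ℝ) (c - 2) (by linear_combination (norm := module) h)).1 (by norm_num)
        · exact absurd (hindep (-2 : ℝ) (c - 3) (by linear_combination (norm := module) h)).1 (by norm_num)
        · exact absurd (hindep (-1 : ℝ) (c - 2) (by linear_combination (norm := module) h)).1 (by norm_num)
      · -- β = η + (2:ℝ) • γ₀
        rcases hm3 with h | h | h | h
        · exact absurd (hindep (-2 : ℝ) (c - 2) (by linear_combination (norm := module) h)).1 (by norm_num)
        · exact absurd (hindep (-2 : ℝ) (c - 3) (by linear_combination (norm := module) h)).1 (by norm_num)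
        · exact absurd (hindep (-2 : ℝ) (c - 4) (by linear_combination (norm := module) h)).1 (by norm_num)
        · exact absurd (hindep (-1 : ℝ) (c - 3) (by linear_combination (norm := module) h)).1 (by norm_num)
      · -- β = γ₀
        exact hne rfl

lemma refl_maps {Pos Φ : Set V} (hΦ : Φ = Pos ∪ (fun x => -x) '' Pos)
    (hdisj : ∀ α ∈ Pos, -α ∉ Pos)
    (f : V →ₗ[ℝ] ℝ) (hf : ∀ α ∈ Pos, 0 < f α)
    (hred : ∀ α ∈ Pos, ∀ r : ℝ, r • α ∈ Pos → r = 1)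
    (hrank2 : ∀ a ∈ Pos, ∀ b ∈ Pos, a ≠ b → ∃ η γ : V,
        Pos ∩ (Submodule.span ℝ {a, b} : Set V) = {η, γ} ∨
        Pos ∩ (Submodule.span ℝ {a, b} : Set V) = {η, η + γ, γ} ∨
        Pos ∩ (Submodule.span ℝ {a, b} : Set V) = {η, η + γ, η + (2 : ℝ) • γ, γ})
    {α : V} (hα : α ∈ Pos)
    (hindec : ¬ ∃ β γ : V, β ∈ Pos ∧ γ ∈ Pos ∧ β + γ = α)
    {g : V ≃ₗ[ℝ] V} (hg : IsRootReflection Φ α g) :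
    (∀ v, g (g v) = v) ∧ g α = -α ∧
      (∀ β ∈ Pos, β ≠ α → g β ∈ Pos ∧ g β ≠ α) := by
  obtain ⟨⟨fα, hfα2, hfαv⟩, hmaps⟩ := hg
  have hinv : ∀ v, g (g v) = v := by
    intro v
    rw [hfαv (g v), hfαv v, map_sub, map_smul, smul_eq_mul, hfα2]
    module
  have hgα : g α = -α := by rw [hfαv, hfα2]; module
  refine ⟨hinv, hgα, fun β hβ hβα => ?_⟩
  have himg : ∀ x : V, x ∈ (fun y => -y) '' Pos ↔ -x ∈ Pos := by
    intro x
    constructor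
    · rintro ⟨p, hp, rfl⟩; simpa using hp
    · intro h; exact ⟨-x, h, by simp⟩
  have hgβP : g β ∈ Pos := by
    have h1 : g β ∈ Φ := hmaps β (by rw [hΦ]; exact Or.inl hβ)
    rw [hΦ] at h1
    rcases h1 with h | h
    · exact h
    · exfalso
      have h2 : -(g β) ∈ Pos := (himg _).mp h
      have h3 : fα β • α - β ∈ Pos := by
        rw [show fα β • α - β = -(β - fα β • α) by module, ← hfαv]
        exact h2
      exact refl_pos f hf hred hrank2 hα hindec hβ (fun h => hβα h.symm) h3
  refine ⟨hgβP, fun h => ?_⟩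
  have : β = -α := by rw [← hinv β, h, hgα]
  rw [this] at hβ
  exact hdisj α hα hβ

lemma cc_exists {Pos Φ : Set V} (hΦ : Φ = Pos ∪ (fun x => -x) '' Pos)
    (hfin : Pos.Finite) (hdisj : ∀ α ∈ Pos, -α ∉ Pos)
    (f : V →ₗ[ℝ] ℝ) (hf : ∀ α ∈ Pos, 0 < f α)
    (hred : ∀ α ∈ Pos, ∀ r : ℝ, r • α ∈ Pos → r = 1)
    (hrefl : ∀ α ∈ Φ, ∃ g : V ≃ₗ[ℝ] V, IsRootReflection Φ α g)
    (hrank2 : ∀ a ∈ Pos, ∀ b ∈ Pos, a ≠ b → ∃ η γ : V,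
        Pos ∩ (Submodule.span ℝ {a, b} : Set V) = {η, γ} ∨
        Pos ∩ (Submodule.span ℝ {a, b} : Set V) = {η, η + γ, γ} ∨
        Pos ∩ (Submodule.span ℝ {a, b} : Set V) = {η, η + γ, η + (2 : ℝ) • γ, γ}) :
    ∀ n : ℕ, ∀ S : Set V, S ⊆ Pos → S.ncard = n → Closed Pos S → Coclosed Pos S →
      ∃ w ∈ Subgroup.closure {g : V ≃ₗ[ℝ] V | ∃ α ∈ Φ, IsRootReflection Φ α g},
        S = {α | α ∈ Pos ∧ -(w α) ∈ Pos} := by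
  intro n
  induction n using Nat.strong_induction_on with
  | _ n IH =>
  intro S hS hcard hcl hco
  by_cases hSe : S = ∅
  · refine ⟨1, Subgroup.one_mem _, ?_⟩
    subst hSe
    ext x
    constructor
    · intro h; exact absurd h (Set.notMem_empty x)
    · rintro ⟨hx, hnx⟩
      exact absurd (show -x ∈ Pos from hnx) (hdisj x hx)
  · obtain ⟨α, hαS, hmin⟩ :=
      Set.exists_min_image S f (hfin.subset hS) (Set.nonempty_iff_ne_empty.mpr hSe)
    have hαP : α ∈ Pos := hS hαS
    have hn0 : 0 < n := by
      rw [← hcard]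
      exact (Set.ncard_pos (hfin.subset hS)).mpr ⟨α, hαS⟩
    have hindec : ¬ ∃ β γ : V, β ∈ Pos ∧ γ ∈ Pos ∧ β + γ = α := by
      rintro ⟨β, γ, hβ, hγ, he⟩
      have hsum : β + γ ∈ S := he ▸ hαS
      have hfe : f α = f β + f γ := by rw [← he, map_add]
      rcases hco β γ hβ hγ hsum with h | h
      · have h1 := hmin β h
        have := hf γ hγ
        linarith
      · have h1 := hmin γ h
        have := hf β hβ
        linarith
    obtain ⟨g, hg⟩ := hrefl α (by rw [hΦ]; exact Or.inl hαP)
    obtain ⟨hginv, hgα, hgmap⟩ := refl_maps hΦ hdisj f hf hred hrank2 hαP hindec hg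
    -- facts about S' := g '' (S \ {α})
    have hS'P : g '' (S \ {α}) ⊆ Pos := by
      rintro _ ⟨β, ⟨hβS, hβα⟩, rfl⟩
      exact (hgmap β (hS hβS) (by simpa using hβα)).1
    have hcard' : (g '' (S \ {α})).ncard = n - 1 := by
      rw [Set.ncard_image_of_injective _ g.injective,
        Set.ncard_sdiff_singleton_of_mem hαS, hcard]
    have hcl' : Closed Pos (g '' (S \ {α})) := by
      rintro _ _ hβ' hγ' hsum' ⟨β, ⟨hβS, hβα⟩, rfl⟩ ⟨γ, ⟨hγS, hγα⟩, rfl⟩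
      have e : β + γ = g (g β + g γ) := by rw [← map_add, hginv]
      have hne' : g β + g γ ≠ α := by
        intro h
        have e2 : β + γ = -α := by rw [e, h, hgα]
        have : f (β + γ) = -(f α) := by rw [e2, map_neg]
        rw [map_add] at this
        have := hf α hαP; have := hf β (hS hβS); have := hf γ (hS hγS)
        linarith
      have hsumP : β + γ ∈ Pos := by
        rw [e]; exact (hgmap _ hsum' hne').1
      have hsumS : β + γ ∈ S := hcl β γ (hS hβS) (hS hγS) hsumP hβS hγS
      have hsumα : β + γ ≠ α := fun h => hindec ⟨β, γ, hS hβS, hS hγS, h⟩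
      exact ⟨β + γ, ⟨hsumS, by simpa using hsumα⟩, by rw [map_add]⟩
    have hco' : Coclosed Pos (g '' (S \ {α})) := by
      intro β' γ' hβ' hγ' hsum'
      obtain ⟨σ, ⟨hσS, hσα'⟩, hσe⟩ := hsum'
      have hσα : σ ≠ α := by simpa using hσα'
      have hσP : σ ∈ Pos := hS hσS
      by_cases hβα : β' = α
      · right
        have hγ'α : γ' ≠ α := by
          intro h
          have h2 : (2:ℝ) • α ∈ Pos := by
            rw [two_smul, show α + α = g σ by rw [hσe, hβα, h]]
            exact (hgmap σ hσP hσα).1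
          have := hred α hαP 2 h2
          norm_num at this
        have e1 : γ' = g σ - α := by rw [hσe, hβα]; abel
        have hgγ' : g γ' = σ + α := by
          rw [e1, map_sub, hginv, hgα, sub_neg_eq_add]
        have hgσP : σ + α ∈ Pos := by
          rw [← hgγ']; exact (hgmap γ' hγ' hγ'α).1
        have hσβS : σ + α ∈ S := hcl σ α hσP hαP hgσP hσS hαS
        have hne2 : σ + α ≠ α := by
          intro h
          exact ne_zero_of_pos f hf hσP (by rwa [add_eq_right] at h)
        refine ⟨σ + α, ⟨hσβS, by simpa using hne2⟩, ?_⟩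
        rw [← hgγ', hginv]
      · by_cases hγα : γ' = α
        · left
          have e1 : β' = g σ - α := by rw [hσe, hγα]; abel
          have hgβ' : g β' = σ + α := by
            rw [e1, map_sub, hginv, hgα, sub_neg_eq_add]
          have hgσP : σ + α ∈ Pos := by
            rw [← hgβ']; exact (hgmap β' hβ' hβα).1
          have hσβS : σ + α ∈ S := hcl σ α hσP hαP hgσP hσS hαS
          have hne2 : σ + α ≠ α := by
            intro h
            exact ne_zero_of_pos f hf hσP (by rwa [add_eq_right] at h)
          refine ⟨σ + α, ⟨hσβS, by simpa using hne2⟩, ?_⟩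
          rw [← hgβ', hginv]
        · have hgβ := hgmap β' hβ' hβα
          have hgγ := hgmap γ' hγ' hγα
          have hsumS : g β' + g γ' ∈ S := by
            have e : g β' + g γ' = σ := by
              rw [← map_add, ← hσe, hginv]
            rw [e]; exact hσS
          rcases hco (g β') (g γ') hgβ.1 hgγ.1 hsumS with h | h
          · left; exact ⟨g β', ⟨h, by simpa using hgβ.2⟩, hginv β'⟩
          · right; exact ⟨g γ', ⟨h, by simpa using hgγ.2⟩, hginv γ'⟩
    obtain ⟨w', hw', hw'eq⟩ := IH (n - 1) (by omega) (g '' (S \ {α})) hS'P hcard' hcl' hco'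
    have hgΦ : g ∈ {g : V ≃ₗ[ℝ] V | ∃ α ∈ Φ, IsRootReflection Φ α g} :=
      ⟨α, by rw [hΦ]; exact Or.inl hαP, hg⟩
    refine ⟨w' * g, mul_mem hw' (Subgroup.subset_closure hgΦ), ?_⟩
    have himg : ∀ x : V, x ∈ (fun y => -y) '' Pos ↔ -x ∈ Pos := by
      intro x
      constructor
      · rintro ⟨p, hp, rfl⟩; simpa using hp
      · intro h; exact ⟨-x, h, by simp⟩
    ext β
    simp only [Set.mem_setOf_eq]
    constructor
    · intro hβS
      have hβP := hS hβS
      refine ⟨hβP, ?_⟩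
      show -(w' (g β)) ∈ Pos
      by_cases hβα : β = α
      · subst hβα
        rw [hgα, map_neg, neg_neg]
        have hαnotS' : β ∉ g '' (S \ {β}) := by
          rintro ⟨σ, ⟨hσS, hσα⟩, hσe⟩
          exact (hgmap σ (hS hσS) (by simpa using hσα)).2 hσe
        rw [hw'eq] at hαnotS'
        have h2 : ¬ -(w' β) ∈ Pos := fun h => hαnotS' ⟨hβP, h⟩
        have h3 : w' β ∈ Φ := closure_maps w' hw' β (by rw [hΦ]; exact Or.inl hβP)
        rw [hΦ] at h3
        rcases h3 with h | h
        · exact h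
        · exact absurd ((himg _).mp h) h2
      · have hgβS' : g β ∈ g '' (S \ {α}) := ⟨β, ⟨hβS, by simpa using hβα⟩, rfl⟩
        rw [hw'eq] at hgβS'
        exact hgβS'.2
    · rintro ⟨hβP, hneg⟩
      by_cases hβα : β = α
      · subst hβα; exact hαS
      · have h1 : g β ∈ Pos := (hgmap β hβP hβα).1
        have h2 : g β ∈ g '' (S \ {α}) := by
          rw [hw'eq]
          exact ⟨h1, show -(w' (g β)) ∈ Pos from hneg⟩
        obtain ⟨σ, hσmem, hσe⟩ := h2
        have := g.injective hσe
        rw [← this]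
        exact hσmem.1

end Stmt5Aux

/-- Let `Φ = Pos ∪ (-Pos)` be a (reduced, finite) root system without `G₂`
subsystems -- every rank-two subsystem has positive part of type `A₁×A₁`, `A₂`
or `B₂` -- and let `W` be its Weyl group, the group generated by the reflections
in the roots.  A subset `S ⊆ Pos` is the inversion set
`I(w) = {α ∈ Pos : w α ∈ -Pos}` of some `w ∈ W` if and only if `S` is biconvex:
for every rank-two subsystem with positive roots forming the chain
`(η, η+γ, γ)` (type `A₂`) or `(η, η+γ, η+2γ, γ)` (type `B₂`, `γ` the shorter
simple root), `S` meets it in an initial or final segment of the chain. -/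
theorem stmt5 {V : Type*} [AddCommGroup V] [Module ℝ V]
    (Pos Φ : Set V) (hΦ : Φ = Pos ∪ (fun x => -x) '' Pos)
    (hfin : Pos.Finite)
    (hdisj : ∀ α ∈ Pos, -α ∉ Pos)
    (hpos : ∃ f : V →ₗ[ℝ] ℝ, ∀ α ∈ Pos, 0 < f α)
    (hred : ∀ α ∈ Pos, ∀ r : ℝ, r • α ∈ Pos → r = 1)
    (hrefl : ∀ α ∈ Φ, ∃ g : V ≃ₗ[ℝ] V, IsRootReflection Φ α g)
    (hrank2 : ∀ a ∈ Pos, ∀ b ∈ Pos, a ≠ b → ∃ η γ : V,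
        Pos ∩ (Submodule.span ℝ {a, b} : Set V) = {η, γ} ∨
        Pos ∩ (Submodule.span ℝ {a, b} : Set V) = {η, η + γ, γ} ∨
        Pos ∩ (Submodule.span ℝ {a, b} : Set V) = {η, η + γ, η + (2 : ℝ) • γ, γ})
    (S : Set V) (hS : S ⊆ Pos) :
    (∃ w ∈ Subgroup.closure {g : V ≃ₗ[ℝ] V | ∃ α ∈ Φ, IsRootReflection Φ α g},
        S = {α | α ∈ Pos ∧ -(w α) ∈ Pos}) ↔
      (∀ η γ : V,
        (Pos ∩ (Submodule.span ℝ {η, γ} : Set V) = {η, η + γ, γ} →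
          IsSeg [η, η + γ, γ] S) ∧
        (Pos ∩ (Submodule.span ℝ {η, γ} : Set V) = {η, η + γ, η + (2 : ℝ) • γ, γ} →
          IsSeg [η, η + γ, η + (2 : ℝ) • γ, γ] S)) := by
  obtain ⟨f, hf⟩ := hpos
  constructor
  · rintro ⟨w, hw, rfl⟩
    have hwΦ := Stmt5Aux.closure_maps w hw
    obtain ⟨hcl, hco⟩ := Stmt5Aux.inv_cc hΦ f hf w hwΦ
    intro η γ
    constructor
    · intro hc
      have hsub : ({η, η + γ, γ} : Set V) ⊆ Pos := by
        rw [← hc]; exact Set.inter_subset_left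
      exact Stmt5Aux.cc_seg3 f hf hred hcl hco
        (hsub (by simp)) (hsub (by simp)) (hsub (by simp))
    · intro hc
      have hsub : ({η, η + γ, η + (2:ℝ) • γ, γ} : Set V) ⊆ Pos := by
        rw [← hc]; exact Set.inter_subset_left
      exact Stmt5Aux.cc_seg4 f hf hred hcl hco
        (hsub (by simp)) (hsub (by simp)) (hsub (by simp)) (hsub (by simp))
  · intro hseg
    have hcl := Stmt5Aux.seg_closed f hf hred hrank2 hseg
    have hco := Stmt5Aux.seg_cocl f hf hred hrank2 hS hseg
    exact Stmt5Aux.cc_exists hΦ hfin hdisj f hf hred hrefl hrank2 S.ncard S hS rfl hcl hco
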